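/- arXiv:2605.29327 — 2 statements merged into one kernel-verified Lean document; each statement's English description precedes it below -/
import Mathlib

section
/- Let L ≥ 2 and D ≥ 1 be integers and X ∈ ℝ^{L×D} be a matrix whose rows X^1, …, X^L all have Euclidean norm 1. Then the maximum over pairs of distinct indices l1 ≠ l2 of the absolute cosine similarity ρ_{l1,l2} = |⟨X^{l1}, X^{l2}⟩| satisfies max_{l1 ≠ l2} ρ_{l1,l2} ≥ √( (1/(L−1)) · (L/eRank(X) − 1) ). -/
open Matrix

lemma trace_eq_sum_eig {n : ℕ} {A : Matrix (Fin n) (Fin n) ℝ} (hA : A.IsHermitian) :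
    A.trace = ∑ i, hA.eigenvalues i := by
  set U : Matrix (Fin n) (Fin n) ℝ := (hA.eigenvectorUnitary : Matrix (Fin n) (Fin n) ℝ) with hU
  set Dg : Matrix (Fin n) (Fin n) ℝ := diagonal (RCLike.ofReal ∘ hA.eigenvalues) with hDg
  have hUs : star U * U = 1 := (Matrix.mem_unitaryGroup_iff').mp hA.eigenvectorUnitary.2
  have hsp : A = U * Dg * star U := hA.spectral_theorem
  conv_lhs => rw [hsp]
  rw [Matrix.trace_mul_comm, ← mul_assoc, hUs, one_mul, trace_diagonal]
  simp

lemma trace_sq_eq_sum_eig_sq {n : ℕ} {A : Matrix (Fin n) (Fin n) ℝ} (hA : A.IsHermitian) :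
    (A * A).trace = ∑ i, hA.eigenvalues i ^ 2 := by
  set U : Matrix (Fin n) (Fin n) ℝ := (hA.eigenvectorUnitary : Matrix (Fin n) (Fin n) ℝ) with hU
  set Dg : Matrix (Fin n) (Fin n) ℝ := diagonal (RCLike.ofReal ∘ hA.eigenvalues) with hDg
  have hUs : star U * U = 1 := (Matrix.mem_unitaryGroup_iff').mp hA.eigenvectorUnitary.2
  have hsp : A = U * Dg * star U := hA.spectral_theorem
  have key : ∀ B : Matrix (Fin n) (Fin n) ℝ, star U * (U * B) = B := fun B => by
    rw [← mul_assoc, hUs, one_mul]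
  conv_lhs => rw [hsp]
  simp only [mul_assoc]
  rw [key, Matrix.trace_mul_comm]
  simp only [mul_assoc]
  rw [hUs, mul_one, Matrix.trace_mul_comm, diagonal_mul_diagonal, trace_diagonal]
  simp [sq]

lemma entropy_le_log_sum_sq {D : ℕ} (p : Fin D → ℝ) (hp : ∀ j, 0 ≤ p j)
    (hsum : ∑ j, p j = 1) :
    ∑ j, p j * Real.log (p j) ≤ Real.log (∑ j, p j ^ 2) := by
  set S : ℝ := ∑ j, p j ^ 2 with hS
  have hSpos : 0 < S := by
    obtain ⟨j, -, hj⟩ := Finset.exists_ne_zero_of_sum_ne_zero (by rw [hsum]; norm_num)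
    exact Finset.sum_pos' (fun i _ => sq_nonneg _) ⟨j, Finset.mem_univ j, by positivity⟩
  have key : ∀ j, p j * Real.log (p j) ≤ p j * Real.log S + (p j ^ 2 / S - p j) := by
    intro j
    rcases eq_or_lt_of_le (hp j) with h0 | h0
    · simp [← h0]
    · have hlog : Real.log (p j) = Real.log S + Real.log (p j / S) := by
        rw [Real.log_div (ne_of_gt h0) (ne_of_gt hSpos)]; ring
      have hle : Real.log (p j / S) ≤ p j / S - 1 :=
        Real.log_le_sub_one_of_pos (by positivity)
      calc p j * Real.log (p j) = p j * Real.log S + p j * Real.log (p j / S) := by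
            rw [hlog]; ring
        _ ≤ p j * Real.log S + p j * (p j / S - 1) := by gcongr
        _ = p j * Real.log S + (p j ^ 2 / S - p j) := by ring
  calc ∑ j, p j * Real.log (p j)
      ≤ ∑ j, (p j * Real.log S + (p j ^ 2 / S - p j)) := Finset.sum_le_sum fun j _ => key j
    _ = (∑ j, p j) * Real.log S + ((∑ j, p j ^ 2) / S - ∑ j, p j) := by
        rw [Finset.sum_add_distrib, Finset.sum_sub_distrib, ← Finset.sum_mul, ← Finset.sum_div]
    _ = Real.log S := by rw [hsum, ← hS, div_self (ne_of_gt hSpos)]; ring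

/-- `XᵀX` is Hermitian (symmetric) for a real matrix `X`. -/
theorem xtx_isHermitian {L D : ℕ} (X : Matrix (Fin L) (Fin D) ℝ) :
    (Xᵀ * X).IsHermitian := by
  simpa [Matrix.conjTranspose_eq_transpose_of_trivial] using
    Matrix.isHermitian_conjTranspose_mul_self X

/-- The effective rank `eRank(X) = exp(−∑_j p_j log p_j)`, where `λ_1, …, λ_D` are the
eigenvalues (with multiplicity) of the positive semidefinite matrix `XᵀX` and
`p_j = λ_j / ∑_k λ_k` (with the convention `0 · log 0 = 0`). -/
noncomputable def eRank {L D : ℕ} (X : Matrix (Fin L) (Fin D) ℝ) : ℝ :=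
  Real.exp (-∑ j,
    ((xtx_isHermitian X).eigenvalues j / ∑ k, (xtx_isHermitian X).eigenvalues k) *
      Real.log
        ((xtx_isHermitian X).eigenvalues j / ∑ k, (xtx_isHermitian X).eigenvalues k))

set_option maxHeartbeats 2000000 in
/-- **Representation Distinguishability Bound**: if `L ≥ 2` and the rows of
`X ∈ ℝ^{L×D}` all have Euclidean norm 1, then the maximum over distinct index pairs
of the absolute cosine similarity `|⟨X^{l1}, X^{l2}⟩|` is at least
`√((1/(L−1)) · (L/eRank(X) − 1))`. -/
theorem max_abs_cosine_ge (L D : ℕ) (hL : 2 ≤ L) (hD : 1 ≤ D)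
    (X : Matrix (Fin L) (Fin D) ℝ)
    (hrow : ∀ l, ∑ j, (X l j) ^ 2 = 1)
    (hne : (Finset.univ.filter fun p : Fin L × Fin L => p.1 ≠ p.2).Nonempty) :
    Real.sqrt ((1 / ((L : ℝ) - 1)) * ((L : ℝ) / _root_.eRank X - 1)) ≤
      (Finset.univ.filter fun p : Fin L × Fin L => p.1 ≠ p.2).sup' hne
        (fun p => |∑ j, X p.1 j * X p.2 j|) := by
  classical
  set hH := xtx_isHermitian X with hHdef
  set lam : Fin D → ℝ := hH.eigenvalues with hlam
  set P := (Finset.univ.filter fun p : Fin L × Fin L => p.1 ≠ p.2) with hP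
  set M := P.sup' hne (fun p => |∑ j, X p.1 j * X p.2 j|) with hM
  set Q : ℝ := ∑ k, lam k ^ 2 with hQdef
  have hps : (Xᵀ * X).PosSemidef := by
    simpa [Matrix.conjTranspose_eq_transpose_of_trivial] using
      Matrix.posSemidef_conjTranspose_mul_self X
  have hlamnn : ∀ j, 0 ≤ lam j := fun j => hps.eigenvalues_nonneg j
  have hL2 : (2 : ℝ) ≤ (L : ℝ) := by exact_mod_cast hL
  have hLpos : (0 : ℝ) < L := by linarith
  have hL1 : (0 : ℝ) < (L : ℝ) - 1 := by linarith
  -- trace identities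
  have hT : ∑ k, lam k = (L : ℝ) := by
    rw [hlam, ← trace_eq_sum_eig hH]
    simp only [Matrix.trace, Matrix.diag, mul_apply, transpose_apply]
    rw [Finset.sum_comm]
    simp [← sq, hrow]
  have hQ : Q = ∑ p : Fin L × Fin L, (∑ j, X p.1 j * X p.2 j) ^ 2 := by
    rw [hQdef, hlam, ← trace_sq_eq_sum_eig_sq hH]
    have h1 : (Xᵀ * X) * (Xᵀ * X) = Xᵀ * (X * Xᵀ * X) := by
      simp only [Matrix.mul_assoc]
    rw [h1, Matrix.trace_mul_comm]
    have h2 : X * Xᵀ * X * Xᵀ = (X * Xᵀ) * (X * Xᵀ) := by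
      simp only [Matrix.mul_assoc]
    rw [h2]
    simp only [Matrix.trace, Matrix.diag, mul_apply, transpose_apply]
    rw [Fintype.sum_prod_type]
    refine Finset.sum_congr rfl fun l1 _ => Finset.sum_congr rfl fun l2 _ => ?_
    rw [sq]
    congr 1
    exact Finset.sum_congr rfl fun j _ => mul_comm _ _
  obtain ⟨p0, hp0⟩ := hne
  have hM0 : 0 ≤ M := by
    have h1 : |∑ j, X p0.1 j * X p0.2 j| ≤ M :=
      Finset.le_sup' (fun p => |∑ j, X p.1 j * X p.2 j|) hp0
    exact (abs_nonneg _).trans h1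
  have hMsq : ∀ p ∈ P, (∑ j, X p.1 j * X p.2 j) ^ 2 ≤ M ^ 2 := fun p hp => by
    rw [← sq_abs]
    exact pow_le_pow_left₀ (abs_nonneg _)
      (Finset.le_sup' (fun p => |∑ j, X p.1 j * X p.2 j|) hp) 2
  have hcard_ne : P.card = L * L - L := by
    have hd : (Finset.univ.filter fun p : Fin L × Fin L => p.1 = p.2).card = L := by
      have h : (Finset.univ.filter fun p : Fin L × Fin L => p.1 = p.2)
          = Finset.univ.image (fun i : Fin L => (i, i)) := by
        ext ⟨a, b⟩
        simp [eq_comm, Prod.ext_iff, and_comm]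
      rw [h, Finset.card_image_of_injective _ fun a b h => (Prod.ext_iff.mp h).1]
      simp
    have h2 := Finset.card_filter_add_card_filter_not
      (s := (Finset.univ : Finset (Fin L × Fin L))) (p := fun p => p.1 = p.2)
    rw [Finset.card_univ, Fintype.card_prod, Fintype.card_fin] at h2
    rw [hP]
    simp only [ne_eq]
    omega
  have hQle : Q ≤ (L : ℝ) + ((L : ℝ) * L - L) * M ^ 2 := by
    rw [hQ, ← Finset.sum_filter_add_sum_filter_not Finset.univ (fun p : Fin L × Fin L => p.1 = p.2)]
    have hcompl : (Finset.univ.filter fun p : Fin L × Fin L => ¬ p.1 = p.2) = P := by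
      rw [hP]
    have hdiag : ∑ p ∈ (Finset.univ.filter fun p : Fin L × Fin L => p.1 = p.2),
        (∑ j, X p.1 j * X p.2 j) ^ 2 = (L : ℝ) := by
      have hconst : ∀ p ∈ (Finset.univ.filter fun p : Fin L × Fin L => p.1 = p.2),
          (∑ j, X p.1 j * X p.2 j) ^ 2 = 1 := by
        intro p hp
        have he : p.1 = p.2 := (Finset.mem_filter.mp hp).2
        have h1 : (∑ j, X p.1 j * X p.2 j) = 1 := by
          rw [← he]
          simpa [sq] using hrow p.1
        rw [h1, one_pow]
      have hd : (Finset.univ.filter fun p : Fin L × Fin L => p.1 = p.2).card = L := by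
        have h : (Finset.univ.filter fun p : Fin L × Fin L => p.1 = p.2)
            = Finset.univ.image (fun i : Fin L => (i, i)) := by
          ext ⟨a, b⟩
          simp [eq_comm, Prod.ext_iff, and_comm]
        rw [h, Finset.card_image_of_injective _ fun a b h => (Prod.ext_iff.mp h).1]
        simp
      rw [Finset.sum_congr rfl hconst, Finset.sum_const, hd]
      simp
    have hoff : ∑ p ∈ (Finset.univ.filter fun p : Fin L × Fin L => ¬ p.1 = p.2),
        (∑ j, X p.1 j * X p.2 j) ^ 2 ≤ ((L : ℝ) * L - L) * M ^ 2 := by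
      rw [hcompl]
      calc ∑ p ∈ P, (∑ j, X p.1 j * X p.2 j) ^ 2 ≤ P.card • M ^ 2 :=
            Finset.sum_le_card_nsmul P _ (M ^ 2) hMsq
        _ = ((L : ℝ) * L - L) * M ^ 2 := by
            rw [nsmul_eq_mul, hcard_ne]
            congr 1
            have hle : L ≤ L * L := Nat.le_mul_of_pos_left L (by omega)
            push_cast [Nat.cast_sub hle]
            ring
    rw [hdiag]
    linarith
  set pr : Fin D → ℝ := fun j => lam j / ∑ k, lam k with hpr
  have hprnn : ∀ j, 0 ≤ pr j := fun j => by
    rw [hpr]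
    exact div_nonneg (hlamnn j) (by rw [hT]; exact hLpos.le)
  have hprsum : ∑ j, pr j = 1 := by
    rw [hpr]
    simp only [← Finset.sum_div]
    rw [hT]
    field_simp
  have hprsq : ∑ j, pr j ^ 2 = Q / (L : ℝ) ^ 2 := by
    rw [hpr, hQdef]
    simp only [hT, div_pow]
    rw [← Finset.sum_div]
  have hSpos : 0 < ∑ j, pr j ^ 2 := by
    obtain ⟨j, -, hj⟩ := Finset.exists_ne_zero_of_sum_ne_zero (by rw [hprsum]; norm_num)
    exact Finset.sum_pos' (fun i _ => sq_nonneg _) ⟨j, Finset.mem_univ j, by positivity⟩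
  have hEdef : _root_.eRank X = Real.exp (-∑ j, pr j * Real.log (pr j)) := rfl
  have hEge : (∑ j, pr j ^ 2)⁻¹ ≤ _root_.eRank X := by
    rw [hEdef, ← Real.exp_log (inv_pos.mpr hSpos), Real.log_inv]
    exact Real.exp_le_exp.mpr (neg_le_neg (entropy_le_log_sum_sq pr hprnn hprsum))
  have hEpos : 0 < _root_.eRank X := Real.exp_pos _
  have h1 : 1 ≤ (∑ j, pr j ^ 2) * _root_.eRank X := by
    calc (1 : ℝ) = (∑ j, pr j ^ 2) * (∑ j, pr j ^ 2)⁻¹ := by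
          rw [mul_inv_cancel₀ (ne_of_gt hSpos)]
      _ ≤ (∑ j, pr j ^ 2) * _root_.eRank X := by gcongr
  have hfrac : (L : ℝ) / _root_.eRank X ≤ (L : ℝ) * ∑ j, pr j ^ 2 := by
    rw [div_le_iff₀ hEpos]
    calc (L : ℝ) = L * 1 := by ring
      _ ≤ (L : ℝ) * ((∑ j, pr j ^ 2) * _root_.eRank X) := mul_le_mul_of_nonneg_left h1 hLpos.le
      _ = (L : ℝ) * (∑ j, pr j ^ 2) * _root_.eRank X := by ring
  have hfrac2 : (L : ℝ) / _root_.eRank X ≤ Q / L := by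
    calc (L : ℝ) / _root_.eRank X ≤ (L : ℝ) * (Q / (L : ℝ) ^ 2) := by rw [← hprsq]; exact hfrac
      _ = Q / L := by field_simp
  have hQL : Q / L ≤ 1 + ((L : ℝ) - 1) * M ^ 2 := by
    rw [div_le_iff₀ hLpos]
    calc Q ≤ (L : ℝ) + ((L : ℝ) * L - L) * M ^ 2 := hQle
      _ = (1 + ((L : ℝ) - 1) * M ^ 2) * L := by ring
  have hkey : (1 / ((L : ℝ) - 1)) * ((L : ℝ) / _root_.eRank X - 1) ≤ M ^ 2 := by
    have h3 : (L : ℝ) / _root_.eRank X - 1 ≤ ((L : ℝ) - 1) * M ^ 2 := by nlinarith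
    rw [one_div, inv_mul_le_iff₀ hL1]
    nlinarith [h3]
  calc Real.sqrt ((1 / ((L : ℝ) - 1)) * ((L : ℝ) / _root_.eRank X - 1))
      ≤ Real.sqrt (M ^ 2) := Real.sqrt_le_sqrt hkey
    _ = M := by rw [Real.sqrt_sq hM0]
end

section
/- Let L, D be positive integers and X ∈ ℝ^{L×D} be a matrix that is zero-centered (∑_{l} X^l = 0 as a vector in ℝ^D) and row-normalized (each row X^l has Euclidean norm 1), and suppose eRank(X) = 1. Then rank(X) = 1, and for every index l, either X^l = X^1 or X^l = −X^1, where X^1 denotes the first row of X. -/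
open Matrix

lemma sum_eig {D : ℕ} {A : Matrix (Fin D) (Fin D) ℝ} (hA : A.IsHermitian) :
    ∑ i, hA.eigenvalues i = A.trace := by
  rw [hA.trace_eq_sum_eigenvalues]
  simp

/-- **Binary State Collapse**: if `X ∈ ℝ^{L×D}` is zero-centered (`∑_l X^l = 0`) and
row-normalized (each row has Euclidean norm 1) with `eRank(X) = 1`, then
`rank(X) = 1` and every row equals the first row or its negation. -/
theorem binary_state_collapse (L D : ℕ) (hL : 0 < L) (hD : 0 < D)
    (X : Matrix (Fin L) (Fin D) ℝ)
    (hcent : ∑ l : Fin L, X l = 0)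
    (hrow : ∀ l, ∑ j, (X l j) ^ 2 = 1)
    (heRank : _root_.eRank X = 1) :
    X.rank = 1 ∧ ∀ l, X l = X ⟨0, hL⟩ ∨ X l = -X ⟨0, hL⟩ := by
  classical
  set hH := xtx_isHermitian X with hHdef
  set lam := hH.eigenvalues with hlam
  set T := ∑ k, lam k with hT
  -- trace = L
  have htrace : T = (L : ℝ) := by
    rw [hT, sum_eig hH]
    have : (Xᵀ * X).trace = ∑ l, ∑ j, (X l j) ^ 2 := by
      simp only [Matrix.trace, Matrix.diag, Matrix.mul_apply, Matrix.transpose_apply, sq]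
      rw [Finset.sum_comm]
    rw [this]
    simp [hrow]
  have hTpos : 0 < T := by rw [htrace]; exact_mod_cast hL
  have hpsd : (Xᵀ * X).PosSemidef := by
    have := Matrix.posSemidef_conjTranspose_mul_self X
    rwa [Matrix.conjTranspose_eq_transpose_of_trivial] at this
  have hnn : ∀ j, 0 ≤ lam j := fun j => hpsd.eigenvalues_nonneg j
  set p : Fin D → ℝ := fun j => lam j / T with hp
  have hpnn : ∀ j, 0 ≤ p j := fun j => div_nonneg (hnn j) hTpos.le
  have hpsum : ∑ j, p j = 1 := by
    rw [hp, ← Finset.sum_div, ← hT, div_self hTpos.ne']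
  have hple : ∀ j, p j ≤ 1 := by
    intro j
    rw [div_le_one hTpos]
    exact Finset.single_le_sum (fun k _ => hnn k) (Finset.mem_univ j)
  -- entropy zero
  have hS : ∑ j, p j * Real.log (p j) = 0 := by
    have := heRank
    unfold _root_.eRank at this
    rw [Real.exp_eq_one_iff, neg_eq_zero] at this
    exact this
  have hterm : ∀ j ∈ Finset.univ, p j * Real.log (p j) = 0 := by
    rw [← Finset.sum_eq_zero_iff_of_nonpos]
    · exact hS
    · intro j _
      exact mul_nonpos_of_nonneg_of_nonpos (hpnn j) (Real.log_nonpos (hpnn j) (hple j))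
  have hp01 : ∀ j, p j = 0 ∨ p j = 1 := by
    intro j
    rcases mul_eq_zero.mp (hterm j (Finset.mem_univ j)) with h | h
    · exact Or.inl h
    · rcases Real.log_eq_zero.mp h with h | h | h
      · exact Or.inl h
      · exact Or.inr h
      · exact absurd (h ▸ hpnn j) (by norm_num)
  -- exactly one j with p j = 1
  obtain ⟨j₀, hj₀⟩ : ∃ j, p j = 1 := by
    by_contra h
    push_neg at h
    have : ∀ j, p j = 0 := fun j => (hp01 j).resolve_right (h j)
    simp [this] at hpsum
  have huniq : ∀ k, p k = 1 → k = j₀ := by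
    intro k hk
    by_contra hne
    have h2 : ({k, j₀} : Finset (Fin D)).sum p ≤ ∑ j, p j :=
      Finset.sum_le_sum_of_subset_of_nonneg (Finset.subset_univ _)
        (fun j _ _ => hpnn j)
    rw [Finset.sum_pair hne] at h2
    have hk' : lam k / T = 1 := hk
    have hj' : lam j₀ / T = 1 := hj₀
    rw [hk', hj', hpsum] at h2
    linarith
  have hcard : Fintype.card {i // lam i ≠ 0} = 1 := by
    rw [Fintype.card_eq_one_iff]
    refine ⟨⟨j₀, ?_⟩, ?_⟩
    · intro h
      have hz : p j₀ = 0 := by show lam j₀ / T = 0; rw [h, zero_div]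
      rw [hj₀] at hz
      norm_num at hz
    · rintro ⟨k, hk⟩
      have hpk : p k ≠ 0 := by
        rw [hp]
        exact div_ne_zero hk hTpos.ne'
      exact Subtype.ext (huniq k ((hp01 k).resolve_left hpk))
  have hrank1 : X.rank = 1 := by
    have := hH.rank_eq_card_non_zero_eigs
    rw [hcard] at this
    rw [← Matrix.rank_transpose_mul_self X]
    exact this
  refine ⟨hrank1, ?_⟩
  -- rows
  have hrkT : Xᵀ.rank = 1 := by rw [Matrix.rank_transpose]; exact hrank1
  set W := LinearMap.range Xᵀ.mulVecLin with hW
  have hfin : Module.finrank ℝ W = 1 := hrkT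
  obtain ⟨v, hv0, hv⟩ := finrank_eq_one_iff'.mp hfin
  have hmem : ∀ l, X l ∈ W := by
    intro l
    refine ⟨Pi.single l 1, ?_⟩
    simp [Matrix.mulVecLin_apply, Matrix.mulVec_single_one]
    rfl
  -- norms
  have key : ∀ l, ∃ c : ℝ, X l = c • (v : Fin D → ℝ) := by
    intro l
    obtain ⟨c, hc⟩ := hv ⟨X l, hmem l⟩
    exact ⟨c, by simpa using congrArg Subtype.val hc.symm⟩
  set s := ∑ j, ((v : Fin D → ℝ) j) ^ 2 with hs
  have hnorm : ∀ (l : Fin L) (c : ℝ), X l = c • (v : Fin D → ℝ) → c ^ 2 * s = 1 := by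
    intro l c hc
    have := hrow l
    rw [hc] at this
    rw [← this, hs, Finset.mul_sum]
    congr 1
    ext j
    simp [Pi.smul_apply, smul_eq_mul]
    ring
  intro l
  obtain ⟨c, hc⟩ := key l
  obtain ⟨c₀, hc₀⟩ := key ⟨0, hL⟩
  have h1 : c ^ 2 * s = 1 := hnorm l c hc
  have h0 : c₀ ^ 2 * s = 1 := hnorm ⟨0, hL⟩ c₀ hc₀
  have hcc : c ^ 2 = c₀ ^ 2 := by
    have hs0 : s ≠ 0 := by intro h; rw [h] at h1; simp at h1
    field_simp at h1 h0 ⊢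
    nlinarith [sq_nonneg s]
  rcases sq_eq_sq_iff_eq_or_eq_neg.mp hcc with h | h
  · left; rw [hc, hc₀, h]
  · right; rw [hc, hc₀, h, neg_smul]
end
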